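/- Let p, p', o be three points in the plane with o the midpoint of the segment pp'. Let z be a point of the circle centered at o with radius ‖p−p'‖/2 lying to the left of the oriented line ℓ(p,p'). Let q be a point of the segment zp' with q ≠ p', and let q' be a point of the ray from o through z that does not belong to the segment oz (i.e., q' = o + t(z−o) for some t > 1). Then ‖p−p'‖ + ‖q−q'‖ < ‖p−q‖ + ‖p'−q'‖. -/

import Mathlib

set_option maxHeartbeats 1000000
open scoped RealInnerProductSpace


noncomputable section

/-- Points of the plane with the Euclidean norm. -/
abbrev Pt : Type := EuclideanSpace ℝ (Fin 2)

/-- The closed disk with diameter the segment `pq`: center `(p+q)/2`, radius `‖p-q‖/2`. -/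
def disk (p q : Pt) : Set Pt := Metric.closedBall (midpoint ℝ p q) (dist p q / 2)


/-- 2D cross product of two vectors. -/
def cross2 (u v : Pt) : ℝ := u 0 * v 1 - u 1 * v 0

/-- The oriented segment from `p` to `q` points to the segment `rs`: `q` lies in the interior
of the triangle `p r s` and in the interior of the disk with diameter `rs`. -/
def pointsTo (p q r s : Pt) : Prop :=
  q ∈ interior (convexHull ℝ ({p, r, s} : Set Pt)) ∧ q ∈ interior (disk r s)

private lemma key_scalar (a b r s w B C D : ℝ) (ha : 0 < a) (hb : 0 < b) (hr : 0 < r)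
    (habr : a^2 + b^2 = 4*r^2) (hs0 : 0 ≤ s) (hs1 : s < 1) (hw : 0 < w)
    (hB : 0 ≤ B) (hC : 0 ≤ C) (hD : 0 ≤ D)
    (hB2 : r * B^2 = r*s^2*b^2 + r*w^2 + s*w*b^2)
    (hC2 : C^2 = a^2 + s^2*b^2)
    (hD2 : r * D^2 = r*b^2 + r*w^2 + w*b^2) :
    2*r + B < C + D := by
  have hs2 : 0 ≤ 1 - s^2 := by nlinarith
  have hb2r : b < 2*r := by
    refine lt_of_pow_lt_pow_left₀ 2 (by positivity) ?_
    nlinarith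
  have hCsb : s*b < C := by
    refine lt_of_pow_lt_pow_left₀ 2 hC ?_
    nlinarith
  have hC2r : 2*s*r ≤ C := by
    refine le_of_pow_le_pow_left₀ two_ne_zero hC ?_
    have h1 : C^2 - (2*s*r)^2 = a^2*(1-s^2) := by linear_combination hC2 + s^2*habr
    nlinarith [mul_nonneg (sq_nonneg a) hs2]
  have hBle : B ≤ s*b + w := by
    refine le_of_pow_le_pow_left₀ two_ne_zero (by positivity) ?_
    have h1 : r*((s*b+w)^2 - B^2) = s*b*w*(2*r-b) := by linear_combination -hB2
    have h2 : 0 ≤ s*b*w*(2*r-b) := mul_nonneg (mul_nonneg (mul_nonneg hs0 hb.le) hw.le) (by linarith)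
    have h3 : 0 ≤ r*((s*b+w)^2 - B^2) := by linarith
    nlinarith [(mul_nonneg_iff_of_pos_left hr).mp h3]
  have hDle : D ≤ 2*r + w := by
    refine le_of_pow_le_pow_left₀ two_ne_zero (by positivity) ?_
    have h1 : r*((2*r+w)^2 - D^2) = a^2*(r+w) := by linear_combination -(r+w)*habr - hD2
    have h2 : 0 ≤ a^2*(r+w) := by positivity
    have h3 : 0 ≤ r*((2*r+w)^2 - D^2) := by linarith
    nlinarith [(mul_nonneg_iff_of_pos_left hr).mp h3]
  have hDpos : 0 < D := by
    rcases hD.lt_or_eq with h | h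
    · exact h
    · exfalso; rw [← h] at hD2
      nlinarith [mul_pos hr (pow_pos hb 2), mul_pos hr (pow_pos hw 2), mul_pos hw (pow_pos hb 2)]
  have k1 : (1+s)*r*B ≤ (1+s)*r*(s*b+w) :=
    mul_le_mul_of_nonneg_left hBle (by positivity)
  have k2 : (1+s)*r*D ≤ (1+s)*r*(2*r+w) :=
    mul_le_mul_of_nonneg_left hDle (by positivity)
  have k3 : (1+s)*r*(s*b) < (1+s)*r*C :=
    mul_lt_mul_of_pos_left hCsb (by positivity)
  have k4 : w*(2*s*r) ≤ w*C := mul_le_mul_of_nonneg_left hC2r hw.le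
  have key4 : (1+s)*r*(B+D) < ((1+s)*r + w)*(2*r + C) := by nlinarith [k1, k2, k3, k4]
  have h5 : r*(D^2 - B^2) = b^2*(1-s)*((1+s)*r + w) := by linear_combination hD2 - hB2
  have h6 : (2*r - C)*(2*r + C) = b^2*(1-s)*(1+s) := by linear_combination -habr - hC2
  have hbs : 0 < b^2*(1-s) := by
    apply mul_pos (by positivity); linarith
  have h7 : b^2*(1-s)*((1+s)*r*(B+D)) < b^2*(1-s)*(((1+s)*r + w)*(2*r + C)) :=
    mul_lt_mul_of_pos_left key4 hbs
  have hid : (C + D - (2*r + B)) * ((D+B)*((2*r+C)*r)) =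
      (2*r+C)*(r*(D^2-B^2)) - (r*(B+D))*((2*r-C)*(2*r+C)) := by ring
  have hmain : 0 < (C + D - (2*r + B)) * ((D+B)*((2*r+C)*r)) := by
    rw [hid, h5, h6]; linarith [h7]
  have hpos : 0 < (D+B)*((2*r+C)*r) := by
    apply mul_pos (by linarith); apply mul_pos (by linarith) hr
  rcases mul_pos_iff.mp hmain with ⟨h, _⟩ | ⟨_, h⟩
  · linarith
  · linarith

/-- Lemma 11 of the paper. -/
theorem stmt13 (p p' o z q q' : Pt) (ho : o = midpoint ℝ p p')
    (hz : dist z o = dist p p' / 2) (hzl : 0 < cross2 (p' - p) (z - p))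
    (hq : q ∈ segment ℝ z p') (hqne : q ≠ p')
    (t : ℝ) (ht : 1 < t) (hq' : q' = o + t • (z - o)) :
    dist p p' + dist q q' < dist p q + dist p' q' := by
  -- vectors
  set F : Pt := p - z with hF
  set E : Pt := p' - z with hE
  set M : Pt := z - o with hM
  have hM2 : M = (-(2⁻¹ : ℝ)) • (F + E) := by
    rw [hM, hF, hE, ho, midpoint_eq_smul_add, invOf_eq_inv]; module
  -- z ≠ p, z ≠ p'
  have hzp : z ≠ p := by
    intro h; rw [h, sub_self] at hzl
    simp [cross2] at hzl
  have hzp' : z ≠ p' := by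
    intro h; rw [h] at hzl
    have : cross2 (p' - p) (p' - p) = 0 := by unfold cross2; ring
    rw [this] at hzl; exact lt_irrefl 0 hzl
  set a : ℝ := ‖F‖ with ha'
  set b : ℝ := ‖E‖ with hb'
  set r : ℝ := ‖M‖ with hr'
  have hapos : 0 < a := by
    rw [ha', hF]; exact norm_sub_pos_iff.mpr (Ne.symm hzp)
  have hbpos : 0 < b := by
    rw [hb', hE]; exact norm_sub_pos_iff.mpr (Ne.symm hzp')
  -- from hz : norms
  have hpp' : p - p' = F - E := by rw [hF, hE]; module
  have hzo : dist z o = r := by rw [dist_eq_norm, hr', hM]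
  have hdpp : dist p p' = ‖F - E‖ := by rw [dist_eq_norm, hpp']
  have hFE : ‖F + E‖ = ‖F - E‖ := by
    have h1 : r = ‖F - E‖ / 2 := by rw [← hzo, ← hdpp]; exact hz
    have h2 : r = ‖F + E‖ / 2 := by
      rw [hr', hM2, norm_smul]
      simp [norm_neg]
      ring
    rw [h1] at h2; linarith
  have hfe : (inner ℝ F  E : ℝ) = 0 := by
    have h1 := norm_add_sq_real F E
    have h2 := norm_sub_sq_real F E
    rw [hFE] at h1
    linarith
  have habr : a^2 + b^2 = 4*r^2 := by
    have h1 : r = ‖F - E‖ / 2 := by rw [← hzo, ← hdpp]; exact hz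
    have h2 := norm_sub_sq_real F E
    rw [hfe] at h2
    have h3 : ‖F - E‖ = 2*r := by rw [h1]; ring
    rw [h3] at h2
    rw [ha', hb']; linarith
  have hrpos : 0 < r := by
    have h4 : 0 < 4*r^2 := by nlinarith
    have h5 : 0 ≤ r := norm_nonneg M
    nlinarith
  have hEM : (inner ℝ E  M : ℝ) = -(b^2)/2 := by
    have hEF : (inner ℝ E F : ℝ) = 0 := by rw [real_inner_comm]; exact hfe
    rw [hM2, real_inner_smul_right, inner_add_right, hEF, real_inner_self_eq_norm_sq, ← hb']
    ring
  -- segment data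
  obtain ⟨c1, c2, hc1, hc2, hc12, hqdef⟩ := hq
  have hs1 : c2 < 1 := by
    rcases lt_or_ge c2 1 with h | h
    · exact h
    · exfalso
      have hc2' : c2 = 1 := le_antisymm (by linarith) h
      have hc1' : c1 = 0 := by linarith
      rw [hc1', hc2'] at hqdef
      simp at hqdef
      exact hqne hqdef.symm
  have hqz : q - z = c2 • E := by
    rw [← hqdef, hE]
    have h : c1 = 1 - c2 := by linarith
    rw [h]; module
  have hq'z : q' - z = (t - 1) • M := by
    rw [hq', hM]; module
  set u : ℝ := t - 1 with hu
  have hupos : 0 < u := by rw [hu]; linarith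
  -- distance squares
  have hPQ : p - q = F - c2 • E := by
    rw [hF]
    have : p - q = (p - z) - (q - z) := by module
    rw [this, hqz]
  have hQQ' : q - q' = c2 • E - u • M := by
    have : q - q' = (q - z) - (q' - z) := by module
    rw [this, hqz, hq'z, hu]
  have hPQ' : p' - q' = E - u • M := by
    have : p' - q' = (p' - z) - (q' - z) := by module
    rw [this, ← hE, hq'z, hu]
  have hC2 : (dist p q)^2 = a^2 + c2^2*b^2 := by
    rw [dist_eq_norm, hPQ, norm_sub_sq_real, real_inner_smul_right, hfe, norm_smul,
      ha', hb']
    simp [mul_pow, sq_abs]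
    try ring
  have hB2' : (dist q q')^2 = c2^2*b^2 + u^2*r^2 - 2*c2*u*(inner ℝ E  M : ℝ) := by
    rw [dist_eq_norm, hQQ', norm_sub_sq_real, real_inner_smul_right, real_inner_smul_left,
      norm_smul, norm_smul, hb', hr']
    simp [mul_pow, sq_abs]
    try ring
  have hD2' : (dist p' q')^2 = b^2 + u^2*r^2 - 2*u*(inner ℝ E  M : ℝ) := by
    rw [dist_eq_norm, hPQ', norm_sub_sq_real, real_inner_smul_right,
      norm_smul, hb', hr']
    simp [mul_pow, sq_abs]
    try ring
  set w : ℝ := u * r with hw'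
  have hwpos : 0 < w := mul_pos hupos hrpos
  have hdpp2 : dist p p' = 2*r := by
    rw [hzo] at hz; linarith [hz]
  rw [hdpp2]
  refine key_scalar a b r c2 w (dist q q') (dist p q) (dist p' q') hapos hbpos hrpos habr
    hc2 hs1 hwpos dist_nonneg dist_nonneg dist_nonneg ?_ hC2 ?_
  · rw [hB2', hEM, hw']; ring
  · rw [hD2', hEM, hw']; ring
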